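/- Let G be the (n×n)-grid. If Q' is obtained from Q ⊆ V_1 by the down-right shifting, or by the down-left shifting, then δ(Q') ≤ δ(Q). -/

import Mathlib

/-- Vertices of the (n × n)-grid, as pairs of integers in {1, ..., n}. -/
def gridSet (n : ℕ) : Finset (ℕ × ℕ) := Finset.Icc 1 n ×ˢ Finset.Icc 1 n

/-- Grid adjacency: (x,y) ~ (x',y') iff |x-x'| + |y-y'| = 1. -/
def gridAdj (p q : ℕ × ℕ) : Prop :=
  |(p.1 : ℤ) - q.1| + |(p.2 : ℤ) - q.2| = 1

instance (p q : ℕ × ℕ) : Decidable (gridAdj p q) := by unfold gridAdj; infer_instance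

/-- V₁: the grid vertices (x, y) with x + y even. -/
def V1 (n : ℕ) : Finset (ℕ × ℕ) := (gridSet n).filter (fun p => Even (p.1 + p.2))

/-- N(S): the set of grid vertices outside S that are adjacent to some vertex of S. -/
def gridNbr (n : ℕ) (S : Finset (ℕ × ℕ)) : Finset (ℕ × ℕ) :=
  (gridSet n).filter (fun q => q ∉ S ∧ ∃ p ∈ S, gridAdj p q)

/-- δ(S) = |N(S)|. -/
def deltaN (n : ℕ) (S : Finset (ℕ × ℕ)) : ℕ := (gridNbr n S).card

/-- Uᵢ = {(x,y) in the grid : x + y = i}, whose vertices are ordered by increasing y. -/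
def Ui (n i : ℕ) : Finset (ℕ × ℕ) := (gridSet n).filter (fun p => p.1 + p.2 = i)

/-- Wᵢ = {(x,y) in the grid : x - y = i}, whose vertices are ordered by increasing y. -/
def Wi (n : ℕ) (i : ℤ) : Finset (ℕ × ℕ) := (gridSet n).filter (fun p => (p.1 : ℤ) - p.2 = i)

/-- The down-right shifting of Q ⊆ V₁: on each diagonal Uᵢ, the r = |Uᵢ ∩ Q| vertices of
Uᵢ ∩ Q are replaced by the first r vertices u₁ⁱ, ..., u_rⁱ of Uᵢ (by increasing y).
A vertex v of V₁ belongs to the shifted set iff its rank on its diagonal is at most r. -/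
def downRightShift (n : ℕ) (Q : Finset (ℕ × ℕ)) : Finset (ℕ × ℕ) :=
  (gridSet n).filter (fun v => Even (v.1 + v.2) ∧
    ((Ui n (v.1 + v.2)).filter (fun u => u.2 ≤ v.2)).card ≤ (Q ∩ Ui n (v.1 + v.2)).card)

/-- The down-left shifting of Q ⊆ V₁: on each diagonal Wᵢ, the r = |Wᵢ ∩ Q| vertices of
Wᵢ ∩ Q are replaced by the first r vertices w₁ⁱ, ..., w_rⁱ of Wᵢ (by increasing y). -/
def downLeftShift (n : ℕ) (Q : Finset (ℕ × ℕ)) : Finset (ℕ × ℕ) :=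
  (gridSet n).filter (fun v => Even (v.1 + v.2) ∧
    ((Wi n ((v.1 : ℤ) - v.2)).filter (fun u => u.2 ≤ v.2)).card ≤
      (Q ∩ Wi n ((v.1 : ℤ) - v.2)).card)

lemma mem_gridSet {n : ℕ} {p : ℕ × ℕ} :
    p ∈ gridSet n ↔ 1 ≤ p.1 ∧ p.1 ≤ n ∧ 1 ≤ p.2 ∧ p.2 ≤ n := by
  simp [gridSet, Finset.mem_product]; tauto

lemma gridAdj_iff {p q : ℕ × ℕ} :
    gridAdj p q ↔ (p.1 = q.1 ∧ (p.2 = q.2 + 1 ∨ q.2 = p.2 + 1)) ∨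
      (p.2 = q.2 ∧ (p.1 = q.1 + 1 ∨ q.1 = p.1 + 1)) := by
  unfold gridAdj
  rcases abs_cases ((p.1 : ℤ) - q.1) with ⟨h1, h1'⟩ | ⟨h1, h1'⟩ <;>
    rcases abs_cases ((p.2 : ℤ) - q.2) with ⟨h2, h2'⟩ | ⟨h2, h2'⟩ <;>
      rw [h1, h2] <;> omega

def dlo (n i : ℕ) : ℕ := max 1 (i - n)
def dhi (n i : ℕ) : ℕ := min n (i - 1)

lemma mem_Ui {n i : ℕ} {p : ℕ × ℕ} :
    p ∈ Ui n i ↔ 1 ≤ p.1 ∧ p.1 ≤ n ∧ 1 ≤ p.2 ∧ p.2 ≤ n ∧ p.1 + p.2 = i := by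
  simp [Ui, mem_gridSet]; tauto

lemma mem_Ui_coords {n i y : ℕ} :
    (i - y, y) ∈ Ui n i ↔ dlo n i ≤ y ∧ y ≤ dhi n i := by
  simp [mem_Ui, dlo, dhi]; omega

lemma Ui_eq_image (n i : ℕ) :
    Ui n i = (Finset.Icc (dlo n i) (dhi n i)).image (fun y => (i - y, y)) := by
  ext p
  simp only [Finset.mem_image, Finset.mem_Icc]
  constructor
  · intro hp
    rw [mem_Ui] at hp
    refine ⟨p.2, ?_, ?_⟩
    · simp [dlo, dhi]; omega
    · have : i - p.2 = p.1 := by omega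
      rw [this]
  · rintro ⟨y, hy, rfl⟩
    rw [mem_Ui_coords]; exact ⟨hy.1, hy.2⟩

lemma diag_injective (i : ℕ) : Function.Injective (fun y => (i - y, y)) := by
  intro a b h; exact congrArg Prod.snd h

lemma card_Ui (n i : ℕ) : (Ui n i).card = dhi n i + 1 - dlo n i := by
  rw [Ui_eq_image, Finset.card_image_of_injective _ (diag_injective i), Nat.card_Icc]

lemma rank_eq {n i : ℕ} (y : ℕ) (hy : dlo n i ≤ y ∧ y ≤ dhi n i) :
    ((Ui n i).filter (fun u => u.2 ≤ y)).card = y + 1 - dlo n i := by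
  rw [Ui_eq_image, Finset.filter_image]
  rw [Finset.card_image_of_injective _ (diag_injective i)]
  have : (Finset.Icc (dlo n i) (dhi n i)).filter (fun z => ((fun y => (i - y, y)) z).2 ≤ y)
      = Finset.Icc (dlo n i) y := by
    ext z; simp only [Finset.mem_filter, Finset.mem_Icc]; omega
  rw [this, Nat.card_Icc]

-- ys sets
def ys (n i : ℕ) (S : Finset (ℕ × ℕ)) : Finset ℕ := (S ∩ Ui n i).image Prod.snd

lemma mem_ys {n i : ℕ} {S : Finset (ℕ × ℕ)} {y : ℕ} :
    y ∈ ys n i S ↔ (i - y, y) ∈ S ∧ (i - y, y) ∈ Ui n i := by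
  constructor
  · intro h
    simp only [ys, Finset.mem_image, Finset.mem_inter] at h
    obtain ⟨p, ⟨hpS, hpU⟩, rfl⟩ := h
    have hU := mem_Ui.1 hpU
    have : (i - p.2, p.2) = p := by
      have : i - p.2 = p.1 := by omega
      rw [this]
    rw [this]; exact ⟨hpS, hpU⟩
  · rintro ⟨h1, h2⟩
    simp only [ys, Finset.mem_image, Finset.mem_inter]
    exact ⟨(i - y, y), ⟨h1, h2⟩, rfl⟩

lemma ys_subset_Icc {n i : ℕ} {S : Finset (ℕ × ℕ)} :
    ys n i S ⊆ Finset.Icc (dlo n i) (dhi n i) := by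
  intro y hy
  have := (mem_ys.1 hy).2
  rw [mem_Ui_coords] at this
  simp [Finset.mem_Icc]; omega

lemma card_ys {n i : ℕ} (S : Finset (ℕ × ℕ)) : (ys n i S).card = (S ∩ Ui n i).card := by
  apply Finset.card_image_of_injOn
  intro p hp q hq h
  simp only [Finset.mem_inter, Finset.mem_coe] at hp hq
  have h1 := mem_Ui.1 hp.2
  have h2 := mem_Ui.1 hq.2
  ext
  · omega
  · exact h

-- generalized shift
def shiftG (n c : ℕ) (Q : Finset (ℕ × ℕ)) : Finset (ℕ × ℕ) :=
  (gridSet n).filter (fun v => (v.1 + v.2) % 2 = c ∧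
    ((Ui n (v.1 + v.2)).filter (fun u => u.2 ≤ v.2)).card ≤ (Q ∩ Ui n (v.1 + v.2)).card)

lemma r_le (n e : ℕ) (Q : Finset (ℕ × ℕ)) :
    (Q ∩ Ui n e).card ≤ dhi n e + 1 - dlo n e := by
  rw [← card_Ui n e]
  exact Finset.card_le_card Finset.inter_subset_right

lemma ys_shiftG_same {n c e : ℕ} (Q : Finset (ℕ × ℕ)) (he : e % 2 = c) :
    ys n e (shiftG n c Q) = Finset.Ico (dlo n e) (dlo n e + (Q ∩ Ui n e).card) := by
  have hr := r_le n e Q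
  ext y
  rw [mem_ys, Finset.mem_Ico]
  constructor
  · rintro ⟨h1, h2⟩
    have hc := mem_Ui_coords.1 h2
    simp only [shiftG, Finset.mem_filter] at h1
    obtain ⟨-, -, hrank⟩ := h1
    have hsum2 : (e - y) + y = e := by
      have := mem_Ui.1 h2; omega
    rw [hsum2, rank_eq y hc] at hrank
    omega
  · intro hy
    have hIcc : dlo n e ≤ y ∧ y ≤ dhi n e := by omega
    have hU : (e - y, y) ∈ Ui n e := mem_Ui_coords.2 hIcc
    refine ⟨?_, hU⟩
    simp only [shiftG, Finset.mem_filter]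
    have hsum2 : (e - y) + y = e := by
      have := mem_Ui.1 hU; omega
    have hg : (e - y, y) ∈ gridSet n := Finset.mem_of_mem_filter _ hU
    refine ⟨hg, by simpa [hsum2] using he, ?_⟩
    have : ((e : ℕ) - y, y).1 + ((e : ℕ) - y, y).2 = e := hsum2
    rw [this, rank_eq y hIcc]
    omega

lemma ys_shiftG_opp {n c e : ℕ} (Q : Finset (ℕ × ℕ)) (he : e % 2 ≠ c) :
    ys n e (shiftG n c Q) = ∅ := by
  ext y
  rw [mem_ys]
  simp only [Finset.notMem_empty, iff_false]
  rintro ⟨h1, h2⟩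
  simp only [shiftG, Finset.mem_filter] at h1
  have hsum2 : (e - y) + y = e := by
    have := mem_Ui.1 h2; omega
  exact he (by rw [← hsum2]; exact h1.2.1)

-- the neighbour predicate on diagonal i, in y-coordinates
def nbrPred (n i : ℕ) (Q : Finset (ℕ × ℕ)) (y : ℕ) : Prop :=
  y ∈ ys n (i - 1) Q ∨ y - 1 ∈ ys n (i - 1) Q ∨ y ∈ ys n (i + 1) Q ∨ y + 1 ∈ ys n (i + 1) Q

instance (n i : ℕ) (Q : Finset (ℕ × ℕ)) (y : ℕ) : Decidable (nbrPred n i Q y) := by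
  unfold nbrPred; infer_instance

lemma nbr_inter_eq {n c i : ℕ} (Q : Finset (ℕ × ℕ))
    (hQ : ∀ p ∈ Q, p ∈ gridSet n ∧ (p.1 + p.2) % 2 = c) (hi : i % 2 ≠ c) (hi2 : 2 ≤ i) :
    gridNbr n Q ∩ Ui n i =
      ((Finset.Icc (dlo n i) (dhi n i)).filter (nbrPred n i Q)).image (fun y => (i - y, y)) := by
  ext q
  simp only [Finset.mem_inter, Finset.mem_image, Finset.mem_filter, Finset.mem_Icc]
  constructor
  · rintro ⟨hqN, hqU⟩
    have hU := mem_Ui.1 hqU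
    refine ⟨q.2, ⟨⟨?_, ?_⟩, ?_⟩, ?_⟩
    · simp [dlo]; omega
    · simp [dhi]; omega
    · -- the predicate
      simp only [gridNbr, Finset.mem_filter] at hqN
      obtain ⟨-, -, p, hpQ, hadj⟩ := hqN
      obtain ⟨hpg, -⟩ := hQ p hpQ
      rw [mem_gridSet] at hpg
      rw [gridAdj_iff] at hadj
      unfold nbrPred
      rcases hadj with ⟨hx, hy | hy⟩ | ⟨hy, hx | hx⟩
      · -- p.2 = q.2 + 1 : p on diagonal i+1
        refine Or.inr (Or.inr (Or.inr ?_))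
        rw [mem_ys]
        have hp : ((i + 1) - (q.2 + 1), q.2 + 1) = p := by
          apply Prod.ext <;> simp <;> omega
        rw [hp]
        exact ⟨hpQ, mem_Ui.2 (by omega)⟩
      · -- q.2 = p.2 + 1 : p on diagonal i-1
        refine Or.inr (Or.inl ?_)
        rw [mem_ys]
        have hp : ((i - 1) - (q.2 - 1), q.2 - 1) = p := by
          apply Prod.ext <;> simp <;> omega
        rw [hp]
        exact ⟨hpQ, mem_Ui.2 (by omega)⟩
      · -- p.1 = q.1 + 1 : p on diagonal i+1
        refine Or.inr (Or.inr (Or.inl ?_))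
        rw [mem_ys]
        have hp : ((i + 1) - q.2, q.2) = p := by
          apply Prod.ext <;> simp <;> omega
        rw [hp]
        exact ⟨hpQ, mem_Ui.2 (by omega)⟩
      · -- q.1 = p.1 + 1 : p on diagonal i-1
        refine Or.inl ?_
        rw [mem_ys]
        have hp : ((i - 1) - q.2, q.2) = p := by
          apply Prod.ext <;> simp <;> omega
        rw [hp]
        exact ⟨hpQ, mem_Ui.2 (by omega)⟩
    · have : i - q.2 = q.1 := by omega
      rw [this]
  · rintro ⟨y, ⟨⟨h1, h2⟩, hpred⟩, rfl⟩
    have hU : (i - y, y) ∈ Ui n i := mem_Ui_coords.2 ⟨h1, h2⟩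
    have hUc := mem_Ui.1 hU
    simp only at hUc
    refine ⟨?_, hU⟩
    simp only [gridNbr, Finset.mem_filter]
    refine ⟨Finset.mem_of_mem_filter _ hU, ?_, ?_⟩
    · intro hmem
      have := (hQ _ hmem).2
      have hsum : (i - y) + y = i := by omega
      simp only [hsum] at this
      exact hi this
    · unfold nbrPred at hpred
      have h1' : 1 ≤ y := by
        have : 1 ≤ dlo n i := le_max_left 1 _
        omega
      rcases hpred with h | h | h | h <;> rw [mem_ys] at h <;>
        obtain ⟨hpQ, hpU⟩ := h <;> have hc := mem_Ui.1 hpU <;>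
        refine ⟨_, hpQ, gridAdj_iff.2 ?_⟩ <;> dsimp only at hc ⊢ <;> omega

lemma card_nbr_inter {n c i : ℕ} (Q : Finset (ℕ × ℕ))
    (hQ : ∀ p ∈ Q, p ∈ gridSet n ∧ (p.1 + p.2) % 2 = c) (hi : i % 2 ≠ c) (hi2 : 2 ≤ i) :
    (gridNbr n Q ∩ Ui n i).card =
      ((Finset.Icc (dlo n i) (dhi n i)).filter (nbrPred n i Q)).card := by
  rw [nbr_inter_eq Q hQ hi hi2, Finset.card_image_of_injective _ (diag_injective i)]

lemma nbr_inter_same_class {n c i : ℕ} (Q : Finset (ℕ × ℕ))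
    (hQ : ∀ p ∈ Q, p ∈ gridSet n ∧ (p.1 + p.2) % 2 = c) (hi : i % 2 = c) :
    gridNbr n Q ∩ Ui n i = ∅ := by
  ext q
  simp only [Finset.mem_inter, Finset.notMem_empty, iff_false]
  rintro ⟨hqN, hqU⟩
  have hU := mem_Ui.1 hqU
  simp only [gridNbr, Finset.mem_filter] at hqN
  obtain ⟨-, -, p, hpQ, hadj⟩ := hqN
  have hpar := (hQ p hpQ).2
  rw [gridAdj_iff] at hadj
  have : (p.1 + p.2) % 2 ≠ (q.1 + q.2) % 2 := by
    rcases hadj with ⟨hx, hy | hy⟩ | ⟨hy, hx | hx⟩ <;> omega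
  rw [hpar] at this
  omega

lemma deltaN_eq_sum (n : ℕ) (S : Finset (ℕ × ℕ)) :
    deltaN n S = ∑ i ∈ Finset.Icc 2 (2 * n), (gridNbr n S ∩ Ui n i).card := by
  unfold deltaN
  rw [Finset.card_eq_sum_card_fiberwise
    (f := fun p => p.1 + p.2) (t := Finset.Icc 2 (2 * n)) ?_]
  · apply Finset.sum_congr rfl
    intro i _
    congr 1
    ext q
    simp only [Finset.mem_filter, Finset.mem_inter, mem_Ui]
    have : q ∈ gridNbr n S → q ∈ gridSet n := fun h => Finset.mem_of_mem_filter _ h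
    constructor
    · rintro ⟨h1, h2⟩
      have hg := mem_gridSet.1 (this h1)
      exact ⟨h1, by omega⟩
    · rintro ⟨h1, h2⟩
      exact ⟨h1, by omega⟩
  · intro p hp
    have hg := mem_gridSet.1 (Finset.mem_of_mem_filter _ hp)
    simp [Finset.mem_Icc]; omega

-- prefix filters are intervals
lemma prefix_filter_up {a a' b' r : ℕ} (ha : 1 ≤ a) (hr : 1 ≤ r) (haa' : a ≤ a') :
    (Finset.Icc a' b').filter (fun y => y ∈ Finset.Ico a (a + r) ∨ y - 1 ∈ Finset.Ico a (a + r))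
      = Finset.Icc a' (min b' (a + r)) := by
  ext y; simp only [Finset.mem_filter, Finset.mem_Icc, Finset.mem_Ico]; omega

lemma prefix_filter_down {a a' b' r : ℕ} (hr : 1 ≤ r) (haa' : a ≤ a' + 1) :
    (Finset.Icc a' b').filter (fun y => y ∈ Finset.Ico a (a + r) ∨ y + 1 ∈ Finset.Ico a (a + r))
      = Finset.Icc a' (min b' (a + r - 1)) := by
  ext y; simp only [Finset.mem_filter, Finset.mem_Icc, Finset.mem_Ico]; omega

-- side lemma, upward contribution, widening case
lemma sideUp1 {a b : ℕ} (A : Finset ℕ) (hA : A ⊆ Finset.Icc a b) (hne : A.Nonempty) :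
    A.card + 1 ≤ ((Finset.Icc a (b + 1)).filter (fun y => y ∈ A ∨ y - 1 ∈ A)).card := by
  set M := A.max' hne with hM
  have hMA : M ∈ A := A.max'_mem hne
  have hMb : M ≤ b := by have := hA hMA; simp [Finset.mem_Icc] at this; omega
  have hnotmem : M + 1 ∉ A := fun h => by have := A.le_max' _ h; omega
  have hsub : insert (M + 1) A ⊆
      (Finset.Icc a (b + 1)).filter (fun y => y ∈ A ∨ y - 1 ∈ A) := by
    intro y hy
    simp only [Finset.mem_insert] at hy
    simp only [Finset.mem_filter, Finset.mem_Icc]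
    rcases hy with rfl | hy
    · have := hA hMA; simp [Finset.mem_Icc] at this
      refine ⟨by omega, Or.inr (by simpa using hMA)⟩
    · have := hA hy; simp [Finset.mem_Icc] at this
      exact ⟨by omega, Or.inl hy⟩
  calc A.card + 1 = (insert (M + 1) A).card := (Finset.card_insert_of_notMem hnotmem).symm
    _ ≤ _ := Finset.card_le_card hsub

-- side lemma, upward contribution, shifting case
lemma sideUp2 {a b : ℕ} (ha : 1 ≤ a) (A : Finset ℕ) (hA : A ⊆ Finset.Icc a b) :
    min (b - a) A.card ≤ ((Finset.Icc (a + 1) b).filter (fun y => y ∈ A ∨ y - 1 ∈ A)).card := by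
  by_cases hfull : Finset.Icc a (b - 1) ⊆ A
  · have hsub : Finset.Icc (a + 1) b ⊆
        (Finset.Icc (a + 1) b).filter (fun y => y ∈ A ∨ y - 1 ∈ A) := by
      intro y hy
      simp only [Finset.mem_Icc] at hy
      simp only [Finset.mem_filter, Finset.mem_Icc]
      exact ⟨hy, Or.inr (hfull (by simp [Finset.mem_Icc]; omega))⟩
    have := Finset.card_le_card hsub
    rw [Nat.card_Icc] at this
    omega
  · obtain ⟨G, hGne⟩ : ((Finset.Icc a (b - 1)) \ A).Nonempty := by
      rw [Finset.sdiff_nonempty]; exact hfull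
    have hGne' : ((Finset.Icc a (b - 1)) \ A).Nonempty := ⟨G, hGne⟩
    set g := ((Finset.Icc a (b - 1)) \ A).max' hGne' with hg
    have hgmem := Finset.max'_mem _ hGne'
    rw [← hg] at hgmem
    simp only [Finset.mem_sdiff, Finset.mem_Icc] at hgmem
    obtain ⟨⟨hga, hgb⟩, hgA⟩ := hgmem
    have hle : A.card ≤ ((Finset.Icc (a + 1) b).filter (fun y => y ∈ A ∨ y - 1 ∈ A)).card := by
      apply Finset.card_le_card_of_injOn (fun y => if g < y then y else y + 1)
      · intro y hyA
        have hy := hA hyA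
        simp only [Finset.mem_Icc] at hy
        have hyg : y ≠ g := fun h => hgA (h ▸ hyA)
        simp only [Finset.mem_coe, Finset.mem_filter, Finset.mem_Icc]
        split_ifs with h
        · exact ⟨⟨by omega, by omega⟩, Or.inl hyA⟩
        · exact ⟨⟨by omega, by omega⟩, Or.inr (by simpa using hyA)⟩
      · intro y1 h1 y2 h2 heq
        have hy1g : y1 ≠ g := fun h => hgA (h ▸ h1)
        have hy2g : y2 ≠ g := fun h => hgA (h ▸ h2)
        simp only at heq
        split_ifs at heq <;> omega
    omega

-- side lemma, downward contribution, widening case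
lemma sideDown1 {a b : ℕ} (ha : 2 ≤ a) (B : Finset ℕ) (hB : B ⊆ Finset.Icc a b)
    (hne : B.Nonempty) :
    B.card + 1 ≤ ((Finset.Icc (a - 1) b).filter (fun y => y ∈ B ∨ y + 1 ∈ B)).card := by
  set m := B.min' hne with hm
  have hmB : m ∈ B := B.min'_mem hne
  have hmc : a ≤ m ∧ m ≤ b := by have := hB hmB; simpa [Finset.mem_Icc] using this
  have hnotmem : m - 1 ∉ B := fun h => by have := B.min'_le _ h; omega
  have hsub : insert (m - 1) B ⊆
      (Finset.Icc (a - 1) b).filter (fun y => y ∈ B ∨ y + 1 ∈ B) := by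
    intro y hy
    simp only [Finset.mem_insert] at hy
    simp only [Finset.mem_filter, Finset.mem_Icc]
    rcases hy with rfl | hy
    · refine ⟨by omega, Or.inr ?_⟩
      have : m - 1 + 1 = m := by omega
      rw [this]; exact hmB
    · have := hB hy; simp [Finset.mem_Icc] at this
      exact ⟨by omega, Or.inl hy⟩
  calc B.card + 1 = (insert (m - 1) B).card := (Finset.card_insert_of_notMem hnotmem).symm
    _ ≤ _ := Finset.card_le_card hsub

-- side lemma, downward contribution, shifting case
lemma sideDown2 {a b : ℕ} (ha : 1 ≤ a) (B : Finset ℕ) (hB : B ⊆ Finset.Icc a b) :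
    min (b - a) B.card ≤ ((Finset.Icc a (b - 1)).filter (fun y => y ∈ B ∨ y + 1 ∈ B)).card := by
  by_cases hfull : Finset.Icc (a + 1) b ⊆ B
  · have hsub : Finset.Icc a (b - 1) ⊆
        (Finset.Icc a (b - 1)).filter (fun y => y ∈ B ∨ y + 1 ∈ B) := by
      intro y hy
      simp only [Finset.mem_Icc] at hy
      simp only [Finset.mem_filter, Finset.mem_Icc]
      exact ⟨hy, Or.inr (hfull (by simp [Finset.mem_Icc]; omega))⟩
    have := Finset.card_le_card hsub
    rw [Nat.card_Icc] at this
    omega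
  · obtain ⟨G, hGne⟩ : ((Finset.Icc (a + 1) b) \ B).Nonempty := by
      rw [Finset.sdiff_nonempty]; exact hfull
    have hGne' : ((Finset.Icc (a + 1) b) \ B).Nonempty := ⟨G, hGne⟩
    set g := ((Finset.Icc (a + 1) b) \ B).min' hGne' with hg
    have hgmem := Finset.min'_mem _ hGne'
    rw [← hg] at hgmem
    simp only [Finset.mem_sdiff, Finset.mem_Icc] at hgmem
    obtain ⟨⟨hga, hgb⟩, hgB⟩ := hgmem
    have hle : B.card ≤ ((Finset.Icc a (b - 1)).filter (fun y => y ∈ B ∨ y + 1 ∈ B)).card := by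
      apply Finset.card_le_card_of_injOn (fun y => if y < g then y else y - 1)
      · intro y hyB
        have hy := hB hyB
        simp only [Finset.mem_Icc] at hy
        have hyg : y ≠ g := fun h => hgB (h ▸ hyB)
        simp only [Finset.mem_coe, Finset.mem_filter, Finset.mem_Icc]
        split_ifs with h
        · exact ⟨⟨by omega, by omega⟩, Or.inl hyB⟩
        · refine ⟨⟨by omega, by omega⟩, Or.inr ?_⟩
          have : y - 1 + 1 = y := by omega
          rw [this]; exact hyB
      · intro y1 h1 y2 h2 heq
        have hc1 := hB h1; have hc2 := hB h2
        simp only [Finset.mem_Icc] at hc1 hc2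
        have hy1g : y1 ≠ g := fun h => hgB (h ▸ h1)
        have hy2g : y2 ≠ g := fun h => hgB (h ▸ h2)
        simp only at heq
        split_ifs at heq <;> omega
    omega

lemma dlo_pos (n i : ℕ) : 1 ≤ dlo n i := le_max_left 1 _

lemma dstep (n i : ℕ) (h2 : 2 ≤ i) :
    (dlo n i = dlo n (i - 1) ∧ dhi n i = dhi n (i - 1) + 1) ∨
    (dlo n i = dlo n (i - 1) + 1 ∧ dhi n i = dhi n (i - 1)) := by
  unfold dlo dhi; omega

lemma dstep' (n i : ℕ) (h2 : 1 ≤ i) :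
    (dlo n (i + 1) = dlo n i ∧ dhi n (i + 1) = dhi n i + 1) ∨
    (dlo n (i + 1) = dlo n i + 1 ∧ dhi n (i + 1) = dhi n i) := by
  unfold dlo dhi; omega

lemma keyUp {a1 b1 a' b' : ℕ} (A : Finset ℕ) (hAsub : A ⊆ Finset.Icc a1 b1)
    (ha1 : 1 ≤ a1) (hrle : A.card ≤ b1 + 1 - a1)
    (hstep : (a' = a1 ∧ b' = b1 + 1) ∨ (a' = a1 + 1 ∧ b' = b1)) :
    ((Finset.Icc a' b').filter
      (fun y => y ∈ Finset.Ico a1 (a1 + A.card) ∨ y - 1 ∈ Finset.Ico a1 (a1 + A.card))).card ≤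
    ((Finset.Icc a' b').filter (fun y => y ∈ A ∨ y - 1 ∈ A)).card := by
  rcases Nat.eq_zero_or_pos A.card with hr0 | hrpos
  · simp [hr0]
  rw [prefix_filter_up ha1 hrpos (by omega : a1 ≤ a')]
  rcases hstep with ⟨hl, hh⟩ | ⟨hl, hh⟩
  · rw [hl, hh]
    have h1 : (Finset.Icc a1 (min (b1 + 1) (a1 + A.card))).card = A.card + 1 := by
      rw [Nat.card_Icc]; omega
    rw [h1]
    exact sideUp1 A hAsub (Finset.card_pos.1 hrpos)
  · rw [hl, hh]
    have h1 : (Finset.Icc (a1 + 1) (min b1 (a1 + A.card))).card = min (b1 - a1) A.card := by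
      rw [Nat.card_Icc]; omega
    rw [h1]
    exact sideUp2 ha1 A hAsub

lemma keyDown {a2 b2 a' b' : ℕ} (B : Finset ℕ) (hBsub : B ⊆ Finset.Icc a2 b2)
    (ha2 : 1 ≤ a2) (ha' : 1 ≤ a') (hrle : B.card ≤ b2 + 1 - a2)
    (hstep : (a2 = a' ∧ b2 = b' + 1) ∨ (a2 = a' + 1 ∧ b2 = b')) :
    ((Finset.Icc a' b').filter
      (fun y => y ∈ Finset.Ico a2 (a2 + B.card) ∨ y + 1 ∈ Finset.Ico a2 (a2 + B.card))).card ≤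
    ((Finset.Icc a' b').filter (fun y => y ∈ B ∨ y + 1 ∈ B)).card := by
  rcases Nat.eq_zero_or_pos B.card with hr0 | hrpos
  · simp [hr0]
  rw [prefix_filter_down hrpos (by omega : a2 ≤ a' + 1)]
  rcases hstep with ⟨hl, hh⟩ | ⟨hl, hh⟩
  · -- a2 = a', b2 = b' + 1
    have h2 := sideDown2 ha2 B hBsub
    rw [(by omega : b2 - 1 = b')] at h2
    rw [← hl]
    refine le_trans ?_ h2
    rw [Nat.card_Icc]; omega
  · -- a2 = a' + 1, b2 = b'
    have h2 := sideDown1 (by omega : 2 ≤ a2) B hBsub (Finset.card_pos.1 hrpos)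
    rw [(by omega : a2 - 1 = a'), hh] at h2
    refine le_trans ?_ h2
    rw [Nat.card_Icc]; omega

lemma keyNest {a1 rA a2 rB a' b' : ℕ} (ha1 : 1 ≤ a1) (h1 : a1 ≤ a') (h2 : a2 ≤ a' + 1) :
    ((Finset.Icc a' b').filter
      (fun y => y ∈ Finset.Ico a1 (a1 + rA) ∨ y - 1 ∈ Finset.Ico a1 (a1 + rA))) ⊆
    ((Finset.Icc a' b').filter
      (fun y => y ∈ Finset.Ico a2 (a2 + rB) ∨ y + 1 ∈ Finset.Ico a2 (a2 + rB))) ∨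
    ((Finset.Icc a' b').filter
      (fun y => y ∈ Finset.Ico a2 (a2 + rB) ∨ y + 1 ∈ Finset.Ico a2 (a2 + rB))) ⊆
    ((Finset.Icc a' b').filter
      (fun y => y ∈ Finset.Ico a1 (a1 + rA) ∨ y - 1 ∈ Finset.Ico a1 (a1 + rA))) := by
  rcases Nat.eq_zero_or_pos rA with h0A | hposA
  · left; intro y hy
    simp only [Finset.mem_filter, Finset.mem_Ico, h0A] at hy
    omega
  rcases Nat.eq_zero_or_pos rB with h0B | hposB
  · right; intro y hy
    simp only [Finset.mem_filter, Finset.mem_Ico, h0B] at hy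
    omega
  rw [prefix_filter_up ha1 hposA h1, prefix_filter_down hposB h2]
  rcases le_total (min b' (a1 + rA)) (min b' (a2 + rB - 1)) with h | h
  · left; exact Finset.Icc_subset_Icc le_rfl h
  · right; exact Finset.Icc_subset_Icc le_rfl h

lemma key {n c i : ℕ} (Q : Finset (ℕ × ℕ))
    (hQ : ∀ p ∈ Q, p ∈ gridSet n ∧ (p.1 + p.2) % 2 = c) (hc : c < 2)
    (hi : i % 2 ≠ c) (h2 : 2 ≤ i) :
    (gridNbr n (shiftG n c Q) ∩ Ui n i).card ≤ (gridNbr n Q ∩ Ui n i).card := by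
  have hQ' : ∀ p ∈ shiftG n c Q, p ∈ gridSet n ∧ (p.1 + p.2) % 2 = c := by
    intro p hp
    simp only [shiftG, Finset.mem_filter] at hp
    exact ⟨hp.1, hp.2.1⟩
  rw [card_nbr_inter Q hQ hi h2, card_nbr_inter (shiftG n c Q) hQ' hi h2]
  have he1 : (i - 1) % 2 = c := by omega
  have he2 : (i + 1) % 2 = c := by omega
  have hcardA : (ys n (i - 1) Q).card = (Q ∩ Ui n (i - 1)).card := card_ys Q
  have hcardB : (ys n (i + 1) Q).card = (Q ∩ Ui n (i + 1)).card := card_ys Q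
  have hsplit : (Finset.Icc (dlo n i) (dhi n i)).filter (nbrPred n i (shiftG n c Q)) =
      ((Finset.Icc (dlo n i) (dhi n i)).filter
        (fun y => y ∈ Finset.Ico (dlo n (i-1)) (dlo n (i-1) + (ys n (i-1) Q).card) ∨
          y - 1 ∈ Finset.Ico (dlo n (i-1)) (dlo n (i-1) + (ys n (i-1) Q).card))) ∪
      ((Finset.Icc (dlo n i) (dhi n i)).filter
        (fun y => y ∈ Finset.Ico (dlo n (i+1)) (dlo n (i+1) + (ys n (i+1) Q).card) ∨
          y + 1 ∈ Finset.Ico (dlo n (i+1)) (dlo n (i+1) + (ys n (i+1) Q).card))) := by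
    rw [← Finset.filter_or]
    apply Finset.filter_congr
    intro y _
    unfold nbrPred
    rw [ys_shiftG_same Q he1, ys_shiftG_same Q he2, hcardA, hcardB]
    constructor <;> intro h <;> tauto
  rw [hsplit]
  have hF1 : ((Finset.Icc (dlo n i) (dhi n i)).filter
        (fun y => y ∈ Finset.Ico (dlo n (i-1)) (dlo n (i-1) + (ys n (i-1) Q).card) ∨
          y - 1 ∈ Finset.Ico (dlo n (i-1)) (dlo n (i-1) + (ys n (i-1) Q).card))).card ≤
      ((Finset.Icc (dlo n i) (dhi n i)).filter (nbrPred n i Q)).card := by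
    refine le_trans (keyUp (ys n (i-1) Q) ys_subset_Icc (dlo_pos n (i-1))
      (by rw [hcardA]; exact r_le n (i-1) Q) (dstep n i h2)) ?_
    apply Finset.card_le_card
    apply Finset.monotone_filter_right
    intro y hy
    unfold nbrPred
    tauto
  have hF2 : ((Finset.Icc (dlo n i) (dhi n i)).filter
        (fun y => y ∈ Finset.Ico (dlo n (i+1)) (dlo n (i+1) + (ys n (i+1) Q).card) ∨
          y + 1 ∈ Finset.Ico (dlo n (i+1)) (dlo n (i+1) + (ys n (i+1) Q).card))).card ≤
      ((Finset.Icc (dlo n i) (dhi n i)).filter (nbrPred n i Q)).card := by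
    refine le_trans (keyDown (ys n (i+1) Q) ys_subset_Icc (dlo_pos n (i+1)) (dlo_pos n i)
      (by rw [hcardB]; exact r_le n (i+1) Q) ?_) ?_
    · rcases dstep' n i (by omega) with ⟨h1', h2'⟩ | ⟨h1', h2'⟩
      · left; exact ⟨h1', h2'⟩
      · right; exact ⟨h1', h2'⟩
    apply Finset.card_le_card
    apply Finset.monotone_filter_right
    intro y hy
    unfold nbrPred
    tauto
  rcases keyNest (a1 := dlo n (i-1)) (rA := (ys n (i-1) Q).card)
      (a2 := dlo n (i+1)) (rB := (ys n (i+1) Q).card)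
      (a' := dlo n i) (b' := dhi n i) (dlo_pos n (i-1))
      (by rcases dstep n i h2 with ⟨h,-⟩|⟨h,-⟩ <;> omega)
      (by rcases dstep' n i (by omega) with ⟨h,-⟩|⟨h,-⟩ <;> omega) with h | h
  · rw [Finset.union_eq_right.2 h]; exact hF2
  · rw [Finset.union_eq_left.2 h]; exact hF1

lemma shiftG_class {n c : ℕ} (Q : Finset (ℕ × ℕ)) :
    ∀ p ∈ shiftG n c Q, p ∈ gridSet n ∧ (p.1 + p.2) % 2 = c := by
  intro p hp
  simp only [shiftG, Finset.mem_filter] at hp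
  exact ⟨hp.1, hp.2.1⟩

theorem masterU {n c : ℕ} (hc : c < 2) (Q : Finset (ℕ × ℕ))
    (hQ : ∀ p ∈ Q, p ∈ gridSet n ∧ (p.1 + p.2) % 2 = c) :
    deltaN n (shiftG n c Q) ≤ deltaN n Q := by
  rw [deltaN_eq_sum, deltaN_eq_sum]
  apply Finset.sum_le_sum
  intro i hi
  simp only [Finset.mem_Icc] at hi
  by_cases hpar : i % 2 = c
  · rw [nbr_inter_same_class (shiftG n c Q) (shiftG_class Q) hpar]
    simp
  · exact key Q hQ hc hpar hi.1

-- ### the reflection x ↦ n+1-x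
def sig (n : ℕ) (p : ℕ × ℕ) : ℕ × ℕ := (n + 1 - p.1, p.2)

lemma sig_mem_grid {n : ℕ} {p : ℕ × ℕ} (hp : p ∈ gridSet n) : sig n p ∈ gridSet n := by
  rw [mem_gridSet] at hp ⊢
  simp only [sig]
  omega

lemma sig_sig {n : ℕ} {p : ℕ × ℕ} (hp : p ∈ gridSet n) : sig n (sig n p) = p := by
  rw [mem_gridSet] at hp
  simp only [sig]
  ext <;> simp <;> omega

lemma sig_injOn {n : ℕ} {p q : ℕ × ℕ} (hp : p ∈ gridSet n) (hq : q ∈ gridSet n)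
    (h : sig n p = sig n q) : p = q := by
  rw [← sig_sig hp, ← sig_sig hq, h]

lemma sig_adj {n : ℕ} {p q : ℕ × ℕ} (hp : p ∈ gridSet n) (hq : q ∈ gridSet n) :
    gridAdj (sig n p) (sig n q) ↔ gridAdj p q := by
  rw [mem_gridSet] at hp hq
  rw [gridAdj_iff, gridAdj_iff]
  simp only [sig]
  omega

lemma card_image_sig {n : ℕ} (S : Finset (ℕ × ℕ)) (hS : ∀ p ∈ S, p ∈ gridSet n) :
    (S.image (sig n)).card = S.card := by
  apply Finset.card_image_of_injOn
  intro p hp q hq h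
  exact sig_injOn (hS p hp) (hS q hq) h

lemma mem_image_sig {n : ℕ} {S : Finset (ℕ × ℕ)} (hS : ∀ p ∈ S, p ∈ gridSet n)
    {q : ℕ × ℕ} (hq : q ∈ gridSet n) : sig n q ∈ S.image (sig n) ↔ q ∈ S := by
  constructor
  · intro h
    obtain ⟨p, hp, hpq⟩ := Finset.mem_image.1 h
    rwa [← sig_injOn (hS p hp) hq hpq]
  · intro h
    exact Finset.mem_image_of_mem _ h

lemma gridNbr_image_sig {n : ℕ} (S : Finset (ℕ × ℕ)) (hS : ∀ p ∈ S, p ∈ gridSet n) :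
    gridNbr n (S.image (sig n)) = (gridNbr n S).image (sig n) := by
  have hNg : ∀ q ∈ gridNbr n S, q ∈ gridSet n := fun q hq => Finset.mem_of_mem_filter _ hq
  ext q
  constructor
  · intro hq
    simp only [gridNbr, Finset.mem_filter] at hq
    obtain ⟨hqg, hqS, p', hp', hadj⟩ := hq
    obtain ⟨p, hp, rfl⟩ := Finset.mem_image.1 hp'
    have hpg := hS p hp
    rw [← sig_sig hqg]
    apply Finset.mem_image_of_mem
    simp only [gridNbr, Finset.mem_filter]
    refine ⟨sig_mem_grid hqg, ?_, p, hp, ?_⟩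
    · intro hmem
      rw [← mem_image_sig hS (sig_mem_grid hqg), sig_sig hqg] at hmem
      exact hqS hmem
    · rw [← sig_adj hpg (sig_mem_grid hqg)] at *
      rwa [sig_sig hqg] at *
      
  · intro hq
    obtain ⟨m, hm, rfl⟩ := Finset.mem_image.1 hq
    simp only [gridNbr, Finset.mem_filter] at hm ⊢
    obtain ⟨hmg, hmS, p, hp, hadj⟩ := hm
    refine ⟨sig_mem_grid hmg, ?_, sig n p, Finset.mem_image_of_mem _ hp, ?_⟩
    · intro hmem
      rw [mem_image_sig hS hmg] at hmem
      exact hmS hmem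
    · rw [sig_adj (hS p hp) hmg]
      exact hadj

lemma deltaN_image_sig {n : ℕ} (S : Finset (ℕ × ℕ)) (hS : ∀ p ∈ S, p ∈ gridSet n) :
    deltaN n (S.image (sig n)) = deltaN n S := by
  unfold deltaN
  rw [gridNbr_image_sig S hS]
  exact card_image_sig _ (fun q hq => Finset.mem_of_mem_filter _ hq)

lemma mem_Wi {n : ℕ} {d : ℤ} {p : ℕ × ℕ} :
    p ∈ Wi n d ↔ p ∈ gridSet n ∧ (p.1 : ℤ) - p.2 = d := by simp [Wi]

lemma corr {n : ℕ} {d : ℤ} {s : ℕ} (hds : (s : ℤ) = n + 1 - d) {p : ℕ × ℕ}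
    (hp : p ∈ gridSet n) : p ∈ Wi n d ↔ sig n p ∈ Ui n s := by
  rw [mem_Wi, mem_Ui]
  have hp' := mem_gridSet.1 hp
  simp only [hp, true_and, sig]
  omega

lemma rank_corr {n : ℕ} {w : ℕ × ℕ} (hw : w ∈ gridSet n) :
    ((Ui n ((sig n w).1 + (sig n w).2)).filter (fun u => u.2 ≤ (sig n w).2)).card
      = ((Wi n ((w.1 : ℤ) - w.2)).filter (fun u => u.2 ≤ w.2)).card := by
  have hw' := mem_gridSet.1 hw
  have hds : (((sig n w).1 + (sig n w).2 : ℕ) : ℤ) = n + 1 - ((w.1 : ℤ) - w.2) := by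
    simp only [sig]; push_cast; omega
  symm
  apply Finset.card_bij (fun u _ => sig n u)
  · intro u hu
    rw [Finset.mem_filter] at hu ⊢
    have hug : u ∈ gridSet n := Finset.mem_of_mem_filter _ hu.1
    exact ⟨(corr hds hug).1 hu.1, hu.2⟩
  · intro u1 h1 u2 h2 h
    have g1 : u1 ∈ gridSet n := Finset.mem_of_mem_filter _ (Finset.mem_of_mem_filter _ h1)
    have g2 : u2 ∈ gridSet n := Finset.mem_of_mem_filter _ (Finset.mem_of_mem_filter _ h2)
    exact sig_injOn g1 g2 h
  · intro v hv
    rw [Finset.mem_filter] at hv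
    have hvg : v ∈ gridSet n := Finset.mem_of_mem_filter _ hv.1
    refine ⟨sig n v, ?_, sig_sig hvg⟩
    rw [Finset.mem_filter]
    constructor
    · rw [corr hds (sig_mem_grid hvg), sig_sig hvg]
      exact hv.1
    · exact hv.2

lemma inter_corr {n : ℕ} {d : ℤ} {s : ℕ} (hds : (s : ℤ) = n + 1 - d)
    (Q : Finset (ℕ × ℕ)) (hQ : ∀ p ∈ Q, p ∈ gridSet n) :
    (Q.image (sig n)) ∩ Ui n s = (Q ∩ Wi n d).image (sig n) := by
  ext q
  simp only [Finset.mem_inter, Finset.mem_image]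
  constructor
  · rintro ⟨⟨p, hp, rfl⟩, hU⟩
    exact ⟨p, ⟨hp, (corr hds (hQ p hp)).2 hU⟩, rfl⟩
  · rintro ⟨p, ⟨hp, hW⟩, rfl⟩
    exact ⟨⟨p, hp, rfl⟩, (corr hds (hQ p hp)).1 hW⟩

lemma image_downLeftShift {n : ℕ} (Q : Finset (ℕ × ℕ)) (hQ : ∀ p ∈ Q, p ∈ gridSet n) :
    (downLeftShift n Q).image (sig n) = shiftG n ((n + 1) % 2) (Q.image (sig n)) := by
  have hmain : ∀ w, w ∈ gridSet n →
      (sig n w ∈ shiftG n ((n + 1) % 2) (Q.image (sig n)) ↔ w ∈ downLeftShift n Q) := by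
    intro w hwg
    have hw' := mem_gridSet.1 hwg
    have hds : (((sig n w).1 + (sig n w).2 : ℕ) : ℤ) = n + 1 - ((w.1 : ℤ) - w.2) := by
      simp only [sig]; push_cast; omega
    have hparity : ((sig n w).1 + (sig n w).2) % 2 = (n + 1) % 2 ↔ Even (w.1 + w.2) := by
      rw [Nat.even_iff]
      simp only [sig]
      omega
    simp only [shiftG, downLeftShift, Finset.mem_filter]
    rw [rank_corr hwg, inter_corr hds Q hQ,
      card_image_sig _ (fun p hp => hQ p (Finset.mem_inter.1 hp).1)]
    constructor
    · rintro ⟨hg, hpar, hrank⟩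
      exact ⟨hwg, hparity.1 hpar, hrank⟩
    · rintro ⟨hg, hpar, hrank⟩
      exact ⟨sig_mem_grid hwg, hparity.2 hpar, hrank⟩
  ext q
  constructor
  · intro hq
    obtain ⟨w, hw, rfl⟩ := Finset.mem_image.1 hq
    exact (hmain w (Finset.mem_of_mem_filter _ hw)).2 hw
  · intro hq
    have hqg : q ∈ gridSet n := Finset.mem_of_mem_filter _ hq
    rw [← sig_sig hqg]
    apply Finset.mem_image_of_mem
    apply (hmain (sig n q) (sig_mem_grid hqg)).1
    rw [sig_sig hqg]
    exact hq

theorem deltaN_shift_down (n : ℕ) (Q : Finset (ℕ × ℕ)) (hQ : Q ⊆ V1 n) :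
    deltaN n (downRightShift n Q) ≤ deltaN n Q ∧
    deltaN n (downLeftShift n Q) ≤ deltaN n Q := by
  have hQg : ∀ p ∈ Q, p ∈ gridSet n := fun p hp => (Finset.mem_filter.1 (hQ hp)).1
  have hQe : ∀ p ∈ Q, Even (p.1 + p.2) := fun p hp => (Finset.mem_filter.1 (hQ hp)).2
  constructor
  · have hEq : downRightShift n Q = shiftG n 0 Q := by
      unfold downRightShift shiftG
      apply Finset.filter_congr
      intro v _
      rw [Nat.even_iff]
    rw [hEq]
    apply masterU (by norm_num) Q
    intro p hp
    exact ⟨hQg p hp, Nat.even_iff.1 (hQe p hp)⟩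
  · have h1 : deltaN n (downLeftShift n Q)
        = deltaN n ((downLeftShift n Q).image (sig n)) :=
      (deltaN_image_sig _ (fun w hw => Finset.mem_of_mem_filter _ hw)).symm
    rw [h1, image_downLeftShift Q hQg]
    calc deltaN n (shiftG n ((n + 1) % 2) (Q.image (sig n)))
        ≤ deltaN n (Q.image (sig n)) := by
          apply masterU (by omega)
          intro p hp
          obtain ⟨q, hq, rfl⟩ := Finset.mem_image.1 hp
          have hqg := mem_gridSet.1 (hQg q hq)
          have hqe := Nat.even_iff.1 (hQe q hq)
          refine ⟨sig_mem_grid (hQg q hq), ?_⟩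
          simp only [sig]
          omega
      _ = deltaN n Q := deltaN_image_sig Q hQg
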